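/- arXiv:2010.12994 — 2 statements merged into one kernel-verified Lean document; each statement's English description precedes it below -/
import Mathlib

section
/- Let $\pi_n, \pi : [s,t] \to \mathbb{R}$ be continuous functions with graphs $\mathfrak{g}\pi_n = \{(\pi_n(r),r) : r \in [s,t]\}$ and $\mathfrak{g}\pi$. If $\mathfrak{g}\pi_n \to \mathfrak{g}\pi$ in the Hausdorff metric, then $\pi_n \to \pi$ uniformly on $[s,t]$. -/
open Filter

/-- The graph of `f` over `[s,t]`. -/
def graphOn (f : ℝ → ℝ) (s t : ℝ) : Set (ℝ × ℝ) :=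
  {p : ℝ × ℝ | ∃ r ∈ Set.Icc s t, p = (f r, r)}

lemma graphOn_eq_image (f : ℝ → ℝ) (s t : ℝ) :
    graphOn f s t = (fun r => (f r, r)) '' Set.Icc s t := by
  ext p; simp [graphOn, Set.mem_image, eq_comm]

lemma isCompact_graphOn {f : ℝ → ℝ} {s t : ℝ} (hf : ContinuousOn f (Set.Icc s t)) :
    IsCompact (graphOn f s t) := by
  rw [graphOn_eq_image]
  exact (isCompact_Icc).image_of_continuousOn (hf.prodMk continuousOn_id)

/-- Hausdorff convergence of graphs of continuous functions implies uniform
convergence of the functions. -/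
theorem tendstoUniformlyOn_of_hausdorff (s t : ℝ) (hst : s ≤ t)
    (π : ℕ → ℝ → ℝ) (πlim : ℝ → ℝ)
    (hcont : ∀ n, ContinuousOn (π n) (Set.Icc s t))
    (hcontlim : ContinuousOn πlim (Set.Icc s t))
    (hH : Tendsto (fun n => Metric.hausdorffDist (graphOn (π n) s t) (graphOn πlim s t))
      atTop (nhds 0)) :
    TendstoUniformlyOn π πlim atTop (Set.Icc s t) := by
  rw [Metric.tendstoUniformlyOn_iff]
  intro ε hε
  -- uniform continuity of πlim
  have huc : UniformContinuousOn πlim (Set.Icc s t) :=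
    (isCompact_Icc).uniformContinuousOn_of_continuous hcontlim
  rw [Metric.uniformContinuousOn_iff] at huc
  obtain ⟨δ, hδpos, hδ⟩ := huc (ε / 2) (half_pos hε)
  set δ' := min δ (ε / 2) with hδ'def
  have hδ'pos : 0 < δ' := lt_min hδpos (half_pos hε)
  have hne : (graphOn πlim s t).Nonempty := ⟨(πlim s, s), s, Set.left_mem_Icc.2 hst, rfl⟩
  filter_upwards [hH.eventually (gt_mem_nhds hδ'pos)] with n hn x hx
  -- (π n x, x) lies in graph of π n
  have hmem : ((π n x, x) : ℝ × ℝ) ∈ graphOn (π n) s t := ⟨x, hx, rfl⟩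
  have hedist : EMetric.hausdorffEdist (graphOn (π n) s t) (graphOn πlim s t) ≠ ⊤ :=
    Metric.hausdorffEdist_ne_top_of_nonempty_of_bounded ⟨(π n s, s), s, Set.left_mem_Icc.2 hst, rfl⟩
      hne (isCompact_graphOn (hcont n)).isBounded (isCompact_graphOn hcontlim).isBounded
  have hinf : Metric.infDist ((π n x, x) : ℝ × ℝ) (graphOn πlim s t) < δ' :=
    lt_of_le_of_lt (Metric.infDist_le_hausdorffDist_of_mem hmem hedist) hn
  obtain ⟨q, hq, hqd⟩ := (Metric.infDist_lt_iff hne).1 hinf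
  obtain ⟨r, hr, rfl⟩ := hq
  have h2 : dist x r < δ' := lt_of_le_of_lt (by rw [Prod.dist_eq]; exact le_max_right _ _) hqd
  have h1 : dist (π n x) (πlim r) < δ' :=
    lt_of_le_of_lt (by rw [Prod.dist_eq]; exact le_max_left _ _) hqd
  have hclose : dist (πlim x) (πlim r) < ε / 2 :=
    hδ x hx r hr (lt_of_lt_of_le h2 (min_le_left _ _))
  calc dist (πlim x) (π n x) ≤ dist (πlim x) (πlim r) + dist (πlim r) (π n x) := dist_triangle _ _ _
    _ < ε / 2 + ε / 2 := by
        apply add_lt_add hclose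
        rw [dist_comm]
        exact lt_of_lt_of_le h1 (min_le_right _ _)
    _ = ε := add_halves ε
end

section
/- Let $B = (B_t)_{t \in [0,1]}$ be a standard Brownian motion and let $r : [0,1] \to \mathbb{R}$ be a fixed continuous function. Then almost surely the function $t \mapsto B_t + r(t)$ attains its maximum over $[0,1]$ at a unique point. -/
open MeasureTheory ProbabilityTheory

/-- `B` is a standard Brownian motion under `P`: measurable marginals, starts at
`0`, a.s. continuous paths, Gaussian increments of variance `t - s`, and
independent increments. -/
def IsStandardBM {Ω : Type*} [MeasurableSpace Ω] (P : Measure Ω)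
    (B : ℝ → Ω → ℝ) : Prop :=
  (∀ t, Measurable (B t)) ∧
  (∀ᵐ ω ∂P, B 0 ω = 0) ∧
  (∀ᵐ ω ∂P, Continuous fun t => B t ω) ∧
  (∀ s t : ℝ, 0 ≤ s → s ≤ t →
    Measure.map (fun ω => B t ω - B s ω) P = gaussianReal 0 (Real.toNNReal (t - s))) ∧
  (∀ (n : ℕ) (τ : Fin (n + 1) → ℝ), Monotone τ → (∀ i, 0 ≤ τ i) →
    iIndepFun
      (fun i : Fin n => fun ω => B (τ i.succ) ω - B (τ i.castSucc) ω) P)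

/-! ### Auxiliary constructions -/

/-- An enumeration of the rationals inside `ℝ`. -/
noncomputable def ratSeq : ℕ → ℝ := fun n => (((Encodable.decode₂ ℚ n).getD 0 : ℚ) : ℝ)

/-- A sequence dense in `[lo, hi]`, obtained by clamping an enumeration of `ℚ`. -/
noncomputable def clampSeq (lo hi : ℝ) (n : ℕ) : ℝ := max lo (min hi (ratSeq n))

lemma clampSeq_mem {lo hi : ℝ} (h : lo ≤ hi) (n : ℕ) :
    clampSeq lo hi n ∈ Set.Icc lo hi :=
  ⟨le_max_left _ _, max_le h (min_le_left _ _)⟩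

lemma clampSeq_near {lo hi u : ℝ} (hu : u ∈ Set.Icc lo hi) {ε : ℝ} (hε : 0 < ε) :
    ∃ n, |clampSeq lo hi n - u| < ε := by
  obtain ⟨w, hw⟩ := exists_rat_near u hε
  refine ⟨Encodable.encode w, ?_⟩
  have hrs : ratSeq (Encodable.encode w) = (w : ℝ) := by
    rw [ratSeq]
    rw [Encodable.decode₂_encode]
    rfl
  have h1 : |min hi (w : ℝ) - min hi u| ≤ |(w : ℝ) - u| := by
    have := abs_min_sub_min_le_max hi (w : ℝ) hi u
    simpa using this
  have h2 : |max lo (min hi (w : ℝ)) - max lo (min hi u)| ≤ |min hi (w : ℝ) - min hi u| := by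
    rw [max_comm lo (min hi (w : ℝ)), max_comm lo (min hi u)]
    exact abs_max_sub_max_le_abs _ _ _
  have hclampu : max lo (min hi u) = u := by
    rw [min_eq_right hu.2, max_eq_right hu.1]
  rw [clampSeq, hrs]
  calc |max lo (min hi (w : ℝ)) - u|
      = |max lo (min hi (w : ℝ)) - max lo (min hi u)| := by rw [hclampu]
    _ ≤ |min hi (w : ℝ) - min hi u| := h2
    _ ≤ |(w : ℝ) - u| := h1
    _ < ε := by rwa [abs_sub_comm]

/-- The supremum of the increments `B t - B base + r t` over the dense sequence in
`[lo, hi]`. -/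
noncomputable def supInc {Ω : Type*} (B : ℝ → Ω → ℝ) (r : ℝ → ℝ) (lo hi base : ℝ)
    (ω : Ω) : ℝ :=
  ⨆ i : ℕ, (B (clampSeq lo hi i) ω - B base ω + r (clampSeq lo hi i))

/-- Deterministic: on a continuous path, `supInc` computes the max value minus `B base`. -/
lemma supInc_eq_max {Ω : Type*} {B : ℝ → Ω → ℝ} {r : ℝ → ℝ} {ω : Ω}
    (hc : Continuous fun t => B t ω) (hr : Continuous r)
    {lo hi base u : ℝ} (h0 : 0 ≤ lo) (hlh : lo ≤ hi) (h1 : hi ≤ 1)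
    (hu : u ∈ Set.Icc lo hi)
    (hmax : IsMaxOn (fun t => B t ω + r t) (Set.Icc (0:ℝ) 1) u) :
    supInc B r lo hi base ω = (B u ω + r u) - B base ω := by
  have hgc : Continuous fun t => B t ω + r t := hc.add hr
  have hsub : Set.Icc lo hi ⊆ Set.Icc (0:ℝ) 1 := Set.Icc_subset_Icc h0 h1
  have hle : ∀ t ∈ Set.Icc lo hi, B t ω + r t ≤ B u ω + r u := fun t ht => hmax (hsub ht)
  have hbdd : BddAbove (Set.range fun i : ℕ =>
      B (clampSeq lo hi i) ω - B base ω + r (clampSeq lo hi i)) := by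
    refine ⟨(B u ω + r u) - B base ω, ?_⟩
    rintro x ⟨i, rfl⟩
    have := hle _ (clampSeq_mem hlh i)
    show B (clampSeq lo hi i) ω - B base ω + r (clampSeq lo hi i) ≤ _
    linarith
  refine le_antisymm ?_ ?_
  · refine ciSup_le fun i => ?_
    have := hle _ (clampSeq_mem hlh i)
    linarith
  · refine le_of_forall_pos_le_add fun ε hε => ?_
    obtain ⟨δ, hδ, hδ'⟩ := Metric.continuous_iff.mp hgc u ε hε
    obtain ⟨i, hnear⟩ := clampSeq_near hu hδ
    have h1' : dist (clampSeq lo hi i) u < δ := by rwa [Real.dist_eq]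
    have h2' := hδ' _ h1'
    rw [Real.dist_eq, abs_sub_lt_iff] at h2'
    have h3 : (B u ω + r u) - ε < B (clampSeq lo hi i) ω + r (clampSeq lo hi i) := by
      linarith [h2'.2]
    have h4 : B (clampSeq lo hi i) ω - B base ω + r (clampSeq lo hi i)
        ≤ supInc B r lo hi base ω := le_ciSup hbdd i
    simp only [supInc] at h4 ⊢
    linarith

lemma indep_mono' {Ω : Type*} [MeasurableSpace Ω] {P : Measure Ω}
    {m1 m2 m1' m2' : MeasurableSpace Ω} (h : Indep m1' m2' P)
    (h1 : m1 ≤ m1') (h2 : m2 ≤ m2') : Indep m1 m2 P :=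
  fun t1 t2 ht1 ht2 => h t1 t2 (h1 _ ht1) (h2 _ ht2)

lemma sum_tele (g : ℕ → ℝ) {e b : ℕ} (h : e ≤ b) :
    ∑ k ∈ Finset.Ico e b, (g (k + 1) - g k) = g b - g e := by
  rw [Finset.sum_Ico_eq_sub _ h, Finset.sum_range_sub, Finset.sum_range_sub]
  ring

/-- The tuple of increments within `[0,p]` and within `[q, ∞)`. -/
noncomputable def incTuple {Ω : Type*} (B : ℝ → Ω → ℝ) (p q : ℝ) (n : ℕ) (ω : Ω) :
    (Fin n → ℝ) × (Fin n → ℝ) :=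
  ((fun i : Fin n => B (clampSeq 0 p (i : ℕ)) ω - B p ω),
   (fun i : Fin n => B (clampSeq q 1 (i : ℕ)) ω - B q ω))

/-- The σ-algebra generated by all the increments in `incTuple`. -/
noncomputable def msupBM {Ω : Type*} (B : ℝ → Ω → ℝ) (p q : ℝ) : MeasurableSpace Ω :=
  ⨆ n : ℕ, MeasurableSpace.comap (incTuple B p q n) inferInstance

/-- The increment `B q - B p` is independent of the finite families of increments
within `[0,p]` and within `[q, ∞)`. -/
lemma indepFun_inc {Ω : Type*} [MeasurableSpace Ω] (P : Measure Ω) [IsProbabilityMeasure P]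
    (B : ℝ → Ω → ℝ) (hB : IsStandardBM P B) {p q : ℝ} (hp : 0 ≤ p) (hpq : p < q) (n : ℕ) :
    IndepFun (fun ω => B q ω - B p ω) (incTuple B p q n) P := by
  show IndepFun (fun ω => B q ω - B p ω)
      (fun ω => ((fun i : Fin n => B (clampSeq 0 p (i : ℕ)) ω - B p ω),
                 (fun i : Fin n => B (clampSeq q 1 (i : ℕ)) ω - B q ω))) P
  classical
  set a : ℕ → ℝ := clampSeq 0 p with ha
  set c : ℕ → ℝ := clampSeq q 1 with hc
  have haIcc : ∀ i : ℕ, a i ∈ Set.Icc (0:ℝ) p := fun i => clampSeq_mem hp i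
  have hcq : ∀ i : ℕ, q ≤ c i := fun i => le_max_left _ _
  set s : Finset ℝ :=
    (((Finset.range n).image a ∪ {p, q}) ∪ (Finset.range n).image c) with hs
  have hps : p ∈ s := by simp [hs]
  have hqs : q ∈ s := by simp [hs]
  have hais : ∀ i : Fin n, a (i : ℕ) ∈ s := fun i =>
    Finset.mem_union_left _ (Finset.mem_union_left _
      (Finset.mem_image.mpr ⟨i, Finset.mem_range.mpr i.isLt, rfl⟩))
  have hcis : ∀ i : Fin n, c (i : ℕ) ∈ s := fun i =>
    Finset.mem_union_right _ (Finset.mem_image.mpr ⟨i, Finset.mem_range.mpr i.isLt, rfl⟩)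
  have hsep : ∀ x ∈ s, x ≤ p ∨ q ≤ x := by
    intro x hx
    simp only [hs, Finset.mem_union, Finset.mem_image, Finset.mem_insert,
      Finset.mem_singleton, Finset.mem_range] at hx
    rcases hx with (⟨i, _, rfl⟩ | rfl | rfl) | ⟨i, _, rfl⟩
    · exact Or.inl (haIcc i).2
    · exact Or.inl le_rfl
    · exact Or.inr le_rfl
    · exact Or.inr (hcq i)
  have hq0 : (0:ℝ) ≤ q := le_of_lt (lt_of_le_of_lt hp hpq)
  have hnonneg : ∀ x ∈ s, 0 ≤ x := by
    intro x hx
    simp only [hs, Finset.mem_union, Finset.mem_image, Finset.mem_insert,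
      Finset.mem_singleton, Finset.mem_range] at hx
    rcases hx with (⟨i, _, rfl⟩ | rfl | rfl) | ⟨i, _, rfl⟩
    · exact (haIcc i).1
    · exact hp
    · exact hq0
    · exact le_trans hq0 (hcq i)
  obtain ⟨m, hm⟩ : ∃ m, s.card = m + 1 := by
    have := Finset.card_pos.mpr ⟨p, hps⟩
    exact ⟨s.card - 1, by omega⟩
  set σ := s.orderIsoOfFin hm with hσdef
  set τ : Fin (m + 1) → ℝ := fun i => (σ i : ℝ) with hτ
  have hτmono : Monotone τ := fun i j hij => Subtype.coe_le_coe.mpr (σ.monotone hij)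
  have hτsm : StrictMono τ := fun i j hij => Subtype.coe_lt_coe.mpr (σ.strictMono hij)
  have hτnn : ∀ i, 0 ≤ τ i := fun i => hnonneg _ (σ i).2
  have hτmem : ∀ i, τ i ∈ s := fun i => (σ i).2
  have hτidx : ∀ x (hx : x ∈ s), τ (σ.symm ⟨x, hx⟩) = x := by
    intro x hx; simp [hτ]
  set jp : Fin (m + 1) := σ.symm ⟨p, hps⟩ with hjpdef
  set jq : Fin (m + 1) := σ.symm ⟨q, hqs⟩ with hjqdef
  have hτjp : τ jp = p := hτidx _ _
  have hτjq : τ jq = q := hτidx _ _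
  have hjlt : (jp : ℕ) < (jq : ℕ) := by
    have h : τ jp < τ jq := by rw [hτjp, hτjq]; exact hpq
    exact hτsm.lt_iff_lt.mp h
  have hjqle : (jq : ℕ) ≤ m := Nat.lt_succ_iff.mp jq.isLt
  have hsucc : (jp : ℕ) + 1 = (jq : ℕ) := by
    by_contra hne
    have h1 : (jp : ℕ) + 1 < (jq : ℕ) := by omega
    have h2 : p < τ ⟨(jp : ℕ) + 1, by omega⟩ := by
      have h2' : τ jp < τ ⟨(jp : ℕ) + 1, by omega⟩ := hτsm (by simp [Fin.lt_def])
      rwa [hτjp] at h2'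
    have h3 : τ ⟨(jp : ℕ) + 1, by omega⟩ < q := by
      have h3' : τ ⟨(jp : ℕ) + 1, by omega⟩ < τ jq := hτsm (by simp [Fin.lt_def]; omega)
      rwa [hτjq] at h3'
    rcases hsep _ (hτmem ⟨(jp : ℕ) + 1, by omega⟩) with h | h <;> linarith
  set j : Fin m := ⟨(jp : ℕ), by omega⟩ with hjdef
  have hjcs : Fin.castSucc j = jp := Fin.ext rfl
  have hjsucc : Fin.succ j = jq := Fin.ext (by simp [hjdef, Fin.succ]; omega)
  set f : Fin m → Ω → ℝ := fun i ω => B (τ i.succ) ω - B (τ i.castSucc) ω with hf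
  have hfmeas : ∀ i, Measurable (f i) := fun i => (hB.1 _).sub (hB.1 _)
  have hind : iIndepFun f P := hB.2.2.2.2 m τ hτmono hτnn
  set T : Finset (Fin m) := Finset.univ.erase j with hT
  have hIndep := hind.indepFun_finset {j} T (by simp [hT, Finset.disjoint_left]) hfmeas
  set vv : ({x // x ∈ T} → ℝ) → ℕ → ℝ := fun v k =>
    if h : k < m then
      (if hj : (⟨k, h⟩ : Fin m) = j then 0
       else v ⟨⟨k, h⟩, by simp [hT, hj]⟩)
    else 0 with hvv
  have hvvmeas : ∀ k, Measurable fun v => vv v k := by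
    intro k
    by_cases h : k < m
    · by_cases hj : (⟨k, h⟩ : Fin m) = j
      · simp only [hvv, dif_pos h, dif_pos hj]; exact measurable_const
      · simp only [hvv, dif_pos h, dif_neg hj]; exact measurable_pi_apply _
    · simp only [hvv, dif_neg h]; exact measurable_const
  have hval : ∀ (ω : Ω) (e b : ℕ) (he : e < m + 1) (hb : b < m + 1), e ≤ b →
      ((j : ℕ) < e ∨ b ≤ (j : ℕ)) →
      ∑ k ∈ Finset.Ico e b, vv (fun i : {x // x ∈ T} => f (i : Fin m) ω) k
        = B (τ ⟨b, hb⟩) ω - B (τ ⟨e, he⟩) ω := by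
    intro ω e b he hb heb hjout
    have hbm : b ≤ m := Nat.lt_succ_iff.mp hb
    set g : ℕ → ℝ := fun k => if h : k < m + 1 then B (τ ⟨k, h⟩) ω else 0 with hg
    have hcong : ∀ k ∈ Finset.Ico e b,
        vv (fun i : {x // x ∈ T} => f (i : Fin m) ω) k = g (k + 1) - g k := by
      intro k hk
      rw [Finset.mem_Ico] at hk
      obtain ⟨hk1, hk2⟩ := hk
      have hkm : k < m := lt_of_lt_of_le hk2 hbm
      have hkj : (⟨k, hkm⟩ : Fin m) ≠ j := by
        intro hEq
        have : k = (j : ℕ) := congrArg Fin.val hEq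
        omega
      simp only [hvv, dif_pos hkm, dif_neg hkj]
      show f (⟨k, hkm⟩ : Fin m) ω = _
      have h1 : g (k + 1) = B (τ (Fin.succ ⟨k, hkm⟩)) ω := by
        rw [hg]
        simp only [dif_pos (Nat.succ_lt_succ hkm)]
        rfl
      have h2 : g k = B (τ (Fin.castSucc ⟨k, hkm⟩)) ω := by
        rw [hg]
        simp only [dif_pos (Nat.lt_succ_of_lt hkm)]
        rfl
      rw [h1, h2]
    rw [Finset.sum_congr rfl hcong, sum_tele g heb, hg]
    simp only [dif_pos hb, dif_pos he]
  set φL : ({x // x ∈ ({j} : Finset (Fin m))} → ℝ) → ℝ :=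
    fun v => v ⟨j, Finset.mem_singleton_self j⟩ with hφL
  set φR : ({x // x ∈ T} → ℝ) → (Fin n → ℝ) × (Fin n → ℝ) := fun v =>
    (fun i : Fin n =>
        -(∑ k ∈ Finset.Ico ((σ.symm ⟨a (i : ℕ), hais i⟩ : Fin (m + 1)) : ℕ) (jp : ℕ), vv v k),
     fun i : Fin n =>
        ∑ k ∈ Finset.Ico (jq : ℕ) ((σ.symm ⟨c (i : ℕ), hcis i⟩ : Fin (m + 1)) : ℕ), vv v k)
    with hφR
  have hmL : Measurable φL := measurable_pi_apply _
  have hmR : Measurable φR := by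
    refine Measurable.prodMk ?_ ?_
    · exact measurable_pi_lambda _ fun i =>
        (Finset.measurable_sum _ fun k _ => hvvmeas k).neg
    · exact measurable_pi_lambda _ fun i =>
        Finset.measurable_sum _ fun k _ => hvvmeas k
  have hcomp := hIndep.comp hmL hmR
  have hDeq : (φL ∘ fun ω (i : {x // x ∈ ({j} : Finset (Fin m))}) => f (i : Fin m) ω)
      = fun ω => B q ω - B p ω := by
    funext ω
    simp only [Function.comp, hφL]
    show f j ω = _
    rw [hf]
    simp only []
    rw [hjsucc, hjcs, hτjp, hτjq]
  have hGeq : (φR ∘ fun ω (i : {x // x ∈ T}) => f (i : Fin m) ω)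
      = fun ω => ((fun i : Fin n => B (a (i : ℕ)) ω - B p ω),
                  (fun i : Fin n => B (c (i : ℕ)) ω - B q ω)) := by
    funext ω
    simp only [Function.comp, hφR]
    refine Prod.ext ?_ ?_
    · funext i
      have hale : ((σ.symm ⟨a (i : ℕ), hais i⟩ : Fin (m + 1)) : ℕ) ≤ (jp : ℕ) := by
        exact σ.symm.monotone (Subtype.mk_le_mk.mpr (haIcc (i : ℕ)).2)
      have h := hval ω _ _ (σ.symm ⟨a (i : ℕ), hais i⟩).isLt jp.isLt hale (Or.inr le_rfl)
      simp only []
      rw [h]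
      have e1 : (⟨((jp : ℕ) : ℕ), jp.isLt⟩ : Fin (m + 1)) = jp := rfl
      have e2 : (⟨((σ.symm ⟨a (i : ℕ), hais i⟩ : Fin (m + 1)) : ℕ),
          (σ.symm ⟨a (i : ℕ), hais i⟩).isLt⟩ : Fin (m + 1)) = σ.symm ⟨a (i : ℕ), hais i⟩ := rfl
      rw [e1, e2, hτjp, hτidx]
      ring
    · funext i
      have hcle : (jq : ℕ) ≤ ((σ.symm ⟨c (i : ℕ), hcis i⟩ : Fin (m + 1)) : ℕ) := by
        exact σ.symm.monotone (Subtype.mk_le_mk.mpr (hcq (i : ℕ)))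
      have h := hval ω _ _ jq.isLt (σ.symm ⟨c (i : ℕ), hcis i⟩).isLt hcle
        (Or.inl hjlt)
      simp only []
      rw [h]
      have e1 : (⟨((jq : ℕ) : ℕ), jq.isLt⟩ : Fin (m + 1)) = jq := rfl
      have e2 : (⟨((σ.symm ⟨c (i : ℕ), hcis i⟩ : Fin (m + 1)) : ℕ),
          (σ.symm ⟨c (i : ℕ), hcis i⟩).isLt⟩ : Fin (m + 1)) = σ.symm ⟨c (i : ℕ), hcis i⟩ := rfl
      rw [e1, e2, hτjq, hτidx]
  rw [hDeq, hGeq] at hcomp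
  exact hcomp

/-- The key null event: for fixed `p < q`, almost surely the increment `B q - B p`
differs from the difference of the two restricted suprema. -/
lemma null_pair {Ω : Type*} [mΩ : MeasurableSpace Ω] (P : Measure Ω) [IsProbabilityMeasure P]
    (B : ℝ → Ω → ℝ) (hB : IsStandardBM P B) (r : ℝ → ℝ) {p q : ℝ}
    (hp : 0 ≤ p) (hpq : p < q) :
    ∀ᵐ ω ∂P, B q ω - B p ω ≠ supInc B r 0 p p ω - supInc B r q 1 q ω := by
  set D : Ω → ℝ := fun ω => B q ω - B p ω with hD
  have hDmeas : Measurable D := (hB.1 _).sub (hB.1 _)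
  have hGmeas : ∀ n, Measurable (incTuple B p q n) := fun n =>
    Measurable.prodMk (measurable_pi_lambda _ fun i => (hB.1 _).sub (hB.1 _))
      (measurable_pi_lambda _ fun i => (hB.1 _).sub (hB.1 _))
  have hmsup : msupBM B p q
      = ⨆ n : ℕ, MeasurableSpace.comap (incTuple B p q n) inferInstance := rfl
  have hmono : Monotone fun n : ℕ =>
      MeasurableSpace.comap (incTuple B p q n) inferInstance := by
    intro n n' hnn'
    have hπ : Measurable fun v : (Fin n' → ℝ) × (Fin n' → ℝ) =>
        ((fun i : Fin n => v.1 (Fin.castLE hnn' i), fun i : Fin n => v.2 (Fin.castLE hnn' i))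
          : (Fin n → ℝ) × (Fin n → ℝ)) :=
      Measurable.prodMk
        (measurable_pi_lambda _ fun i => (measurable_pi_apply _).comp measurable_fst)
        (measurable_pi_lambda _ fun i => (measurable_pi_apply _).comp measurable_snd)
    have hcomp : incTuple B p q n = (fun v : (Fin n' → ℝ) × (Fin n' → ℝ) =>
        ((fun i : Fin n => v.1 (Fin.castLE hnn' i), fun i : Fin n => v.2 (Fin.castLE hnn' i))
          : (Fin n → ℝ) × (Fin n → ℝ))) ∘ incTuple B p q n' := rfl
    calc MeasurableSpace.comap (incTuple B p q n) inferInstance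
        = MeasurableSpace.comap (incTuple B p q n')
            (MeasurableSpace.comap _ inferInstance) := by
          rw [hcomp, ← MeasurableSpace.comap_comp]
      _ ≤ MeasurableSpace.comap (incTuple B p q n') inferInstance :=
          MeasurableSpace.comap_mono (measurable_iff_comap_le.mp hπ)
  have hle : ∀ n : ℕ, MeasurableSpace.comap (incTuple B p q n) inferInstance ≤ mΩ :=
    fun n => measurable_iff_comap_le.mp (hGmeas n)
  have hindepn : ∀ n : ℕ, Indep (MeasurableSpace.comap (incTuple B p q n) inferInstance)
      (MeasurableSpace.comap D inferInstance) P := fun n =>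
    (indepFun_inc P B hB hp hpq n).symm
  have hIndepSup : Indep (msupBM B p q) (MeasurableSpace.comap D inferInstance) P := by
    rw [hmsup]
    exact indep_iSup_of_monotone hindepn hle (measurable_iff_comap_le.mp hDmeas) hmono
  have hGsup : ∀ n, Measurable[msupBM B p q] (incTuple B p q n) := by
    intro n
    refine measurable_iff_comap_le.mpr ?_
    rw [hmsup]
    exact le_iSup (fun n : ℕ => MeasurableSpace.comap (incTuple B p q n) inferInstance) n
  have hcoord1 : ∀ i : ℕ, Measurable[msupBM B p q] fun ω => B (clampSeq 0 p i) ω - B p ω := by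
    intro i
    have hh : (fun ω => B (clampSeq 0 p i) ω - B p ω)
        = (fun v : (Fin (i + 1) → ℝ) × (Fin (i + 1) → ℝ) =>
            v.1 ⟨i, Nat.lt_succ_self i⟩) ∘ incTuple B p q (i + 1) := rfl
    rw [hh]
    exact Measurable.comp ((measurable_pi_apply _).comp measurable_fst) (hGsup (i + 1))
  have hcoord2 : ∀ i : ℕ, Measurable[msupBM B p q] fun ω => B (clampSeq q 1 i) ω - B q ω := by
    intro i
    have hh : (fun ω => B (clampSeq q 1 i) ω - B q ω)
        = (fun v : (Fin (i + 1) → ℝ) × (Fin (i + 1) → ℝ) =>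
            v.2 ⟨i, Nat.lt_succ_self i⟩) ∘ incTuple B p q (i + 1) := rfl
    rw [hh]
    exact Measurable.comp ((measurable_pi_apply _).comp measurable_snd) (hGsup (i + 1))
  have hY : Measurable[msupBM B p q] (supInc B r 0 p p) := by
    have hh : supInc B r 0 p p
        = fun ω => ⨆ i : ℕ, (B (clampSeq 0 p i) ω - B p ω + r (clampSeq 0 p i)) := rfl
    rw [hh]
    exact Measurable.iSup fun i => (hcoord1 i).add_const _
  have hZ : Measurable[msupBM B p q] (supInc B r q 1 q) := by
    have hh : supInc B r q 1 q
        = fun ω => ⨆ i : ℕ, (B (clampSeq q 1 i) ω - B q ω + r (clampSeq q 1 i)) := rfl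
    rw [hh]
    exact Measurable.iSup fun i => (hcoord2 i).add_const _
  set W : Ω → ℝ := fun ω => supInc B r 0 p p ω - supInc B r q 1 q ω with hWdef
  have hWsup : Measurable[msupBM B p q] W := hY.sub hZ
  have hWD : IndepFun W D P :=
    indep_mono' hIndepSup (measurable_iff_comap_le.mp hWsup) le_rfl
  have hmsuple : msupBM B p q ≤ mΩ := by
    rw [hmsup]; exact iSup_le hle
  have hWmeas : Measurable W :=
    measurable_iff_comap_le.mpr (le_trans (measurable_iff_comap_le.mp hWsup) hmsuple)
  have hmap : P.map (fun ω => (W ω, D ω)) = (P.map W).prod (P.map D) :=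
    (indepFun_iff_map_prod_eq_prod_map_map hWmeas.aemeasurable hDmeas.aemeasurable).mp hWD
  have hDlaw : P.map D = gaussianReal 0 (q - p).toNNReal := hB.2.2.2.1 p q hp hpq.le
  have hvne : (q - p).toNNReal ≠ 0 := by
    rw [Ne, Real.toNNReal_eq_zero]
    push_neg
    linarith
  have hdiag : MeasurableSet {x : ℝ × ℝ | x.1 = x.2} :=
    measurableSet_eq_fun measurable_fst measurable_snd
  have hnull : P {ω | W ω = D ω} = 0 := by
    have h1 : {ω | W ω = D ω} = (fun ω => (W ω, D ω)) ⁻¹' {x : ℝ × ℝ | x.1 = x.2} := rfl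
    rw [h1, ← Measure.map_apply (hWmeas.prodMk hDmeas) hdiag, hmap, hDlaw,
      Measure.prod_apply hdiag]
    have hz : ∀ x : ℝ,
        (gaussianReal 0 (q - p).toNNReal) (Prod.mk x ⁻¹' {y : ℝ × ℝ | y.1 = y.2}) = 0 := by
      intro x
      have hx : Prod.mk x ⁻¹' {y : ℝ × ℝ | y.1 = y.2} = {x} := by
        ext y; simp [eq_comm]
      rw [hx]
      exact gaussianReal_absolutelyContinuous 0 hvne (measure_singleton x)
    simp only [hz, lintegral_zero]
  refine ae_iff.mpr ?_
  have h2 : {ω | ¬ B q ω - B p ω ≠ supInc B r 0 p p ω - supInc B r q 1 q ω}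
      = {ω | W ω = D ω} := by
    ext ω; simp [hWdef, hD, eq_comm]
  rw [h2]
  exact hnull

/-- A Brownian motion plus a fixed continuous drift attains its maximum on
`[0,1]` at a unique point almost surely. -/
theorem bm_plus_drift_unique_argmax
    {Ω : Type*} [MeasurableSpace Ω] (P : Measure Ω) [IsProbabilityMeasure P]
    (B : ℝ → Ω → ℝ) (hB : IsStandardBM P B)
    (r : ℝ → ℝ) (hr : Continuous r) :
    ∀ᵐ ω ∂P, ∃! u : ℝ, u ∈ Set.Icc (0:ℝ) 1 ∧
      IsMaxOn (fun t => B t ω + r t) (Set.Icc (0:ℝ) 1) u := by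
  have hcont := hB.2.2.1
  have hpairs : ∀ᵐ ω ∂P, ∀ p' q' : ℚ, 0 ≤ (p' : ℝ) → (p' : ℝ) < (q' : ℝ) →
      B (q' : ℝ) ω - B (p' : ℝ) ω
        ≠ supInc B r 0 (p' : ℝ) (p' : ℝ) ω - supInc B r (q' : ℝ) 1 (q' : ℝ) ω := by
    rw [ae_all_iff]
    intro p'
    rw [ae_all_iff]
    intro q'
    by_cases h1 : 0 ≤ (p' : ℝ)
    · by_cases h2 : (p' : ℝ) < (q' : ℝ)
      · filter_upwards [null_pair P B hB r h1 h2] with ω h _ _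
        exact h
      · filter_upwards with ω h1' h2'
        exact absurd h2' h2
    · filter_upwards with ω h1'
      exact absurd h1' h1
  filter_upwards [hcont, hpairs] with ω hcω hpω
  have hgc : Continuous fun t => B t ω + r t := hcω.add hr
  obtain ⟨u, hu, hmax⟩ := isCompact_Icc.exists_isMaxOn
    (Set.nonempty_Icc.mpr zero_le_one) hgc.continuousOn
  have key : ∀ x y : ℝ, x ∈ Set.Icc (0:ℝ) 1 → y ∈ Set.Icc (0:ℝ) 1 →
      IsMaxOn (fun t => B t ω + r t) (Set.Icc (0:ℝ) 1) x →
      IsMaxOn (fun t => B t ω + r t) (Set.Icc (0:ℝ) 1) y → x < y → False := by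
    intro x y hx hy hxm hym hxy
    obtain ⟨p', hp1, hp2⟩ := exists_rat_btwn hxy
    obtain ⟨q', hq1, hq2⟩ := exists_rat_btwn hp2
    have hp0 : (0:ℝ) ≤ (p' : ℝ) := le_of_lt (lt_of_le_of_lt hx.1 hp1)
    have hq1' : (0:ℝ) ≤ (q' : ℝ) := le_of_lt (lt_of_le_of_lt hp0 hq1)
    have hple : (p' : ℝ) ≤ 1 := le_of_lt (lt_of_lt_of_le (lt_trans hq1 hq2) hy.2)
    have hqle : (q' : ℝ) ≤ 1 := le_of_lt (lt_of_lt_of_le hq2 hy.2)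
    have h1 := supInc_eq_max (base := (p' : ℝ)) hcω hr le_rfl hp0 hple
      ⟨hx.1, le_of_lt hp1⟩ hxm
    have h2 := supInc_eq_max (base := (q' : ℝ)) hcω hr hq1' hqle le_rfl
      ⟨le_of_lt hq2, hy.2⟩ hym
    have hxy' : B x ω + r x = B y ω + r y :=
      le_antisymm (hym hx) (hxm hy)
    exact hpω p' q' hp0 hq1 (by rw [h1, h2, hxy']; ring)
  refine ⟨u, ⟨hu, hmax⟩, ?_⟩
  rintro v ⟨hv, hvmax⟩
  rcases lt_trichotomy v u with h | h | h
  · exact (key v u hv hu hvmax hmax h).elim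
  · exact h
  · exact (key u v hu hv hmax hvmax h).elim
end
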